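/- Let (t_n)_{n≥0} be the Thue–Morse sequence and (b_n)_{n≥1} the paperfolding sequence. Then ζ(5) − (5/3)·π⁵ = ∑_{n≥1} [ (1/32)·(33·t_{n−1} + 31·t_n) + 496·(2b_n − 1) ] / n⁵. -/

import Mathlib

/-- Even-index Euler numbers: `E2 k = E_{2k}`, where `1/cosh t = ∑ E_n t^n/n!`
(equivalently, `E_0 = 1`, odd-index Euler numbers vanish, and
`∑_{j≤n} C(2n,2j) E_{2j} = 0` for `n ≥ 1`). -/
def E2 : ℕ → ℤ
  | 0 => 1
  | n + 1 => -∑ k ∈ (Finset.range (n+1)).attach,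
      ((2*(n+1)).choose (2*k.1) : ℤ) * E2 k.1
decreasing_by exact Finset.mem_range.mp k.2

/-- Thue–Morse sequence: `tm 0 = 0`, `tm (2n) = tm n`, `tm (2n+1) = 1 - tm n`. -/
def tm : ℕ → ℕ
  | 0 => 0
  | n + 1 => if (n+1) % 2 = 0 then tm ((n+1)/2) else 1 - tm ((n+1)/2)
decreasing_by all_goals exact Nat.div_lt_self (Nat.succ_pos n) one_lt_two

/-- Paperfolding (dragon-curve) sequence: `pf (2n) = pf n`, `pf (4n+1) = 0`,
`pf (4n+3) = 1` (with `pf 0 = 0`). -/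
def pf : ℕ → ℕ
  | 0 => 0
  | n + 1 => if (n+1) % 2 = 0 then pf ((n+1)/2) else if (n+1) % 4 = 1 then 0 else 1
decreasing_by exact Nat.div_lt_self (Nat.succ_pos n) one_lt_two

set_option linter.unreachableTactic false
set_option linter.unusedTactic false

lemma tm_two_mul (n : ℕ) : tm (2 * n) = tm n := by
  cases n with
  | zero => rfl
  | succ m =>
    rw [show 2 * (m+1) = (2*m+1)+1 by ring, tm]
    have h1 : ((2*m+1)+1) % 2 = 0 := by omega
    have h2 : ((2*m+1)+1) / 2 = m + 1 := by omega
    rw [h1, h2]; simp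

lemma tm_two_mul_add_one (n : ℕ) : tm (2 * n + 1) = 1 - tm n := by
  rw [show 2 * n + 1 = (2*n)+1 by ring, tm]
  have h1 : (2*n+1) % 2 = 1 := by omega
  have h2 : (2*n+1) / 2 = n := by omega
  rw [h1, h2]; simp

lemma tm_le_one (n : ℕ) : tm n ≤ 1 := by
  induction n using Nat.strong_induction_on with
  | _ n ih =>
    match n with
    | 0 => simp [tm]
    | m + 1 =>
      rw [tm]
      split
      · exact ih _ (Nat.div_lt_self (Nat.succ_pos m) one_lt_two)
      · omega

lemma pf_two_mul (n : ℕ) : pf (2 * n) = pf n := by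
  cases n with
  | zero => rfl
  | succ m =>
    rw [show 2 * (m+1) = (2*m+1)+1 by ring, pf]
    have h1 : ((2*m+1)+1) % 2 = 0 := by omega
    have h2 : ((2*m+1)+1) / 2 = m + 1 := by omega
    rw [h1, h2]; simp

lemma pf_odd (n : ℕ) : pf (2 * n + 1) = if n % 2 = 0 then 0 else 1 := by
  rw [show 2 * n + 1 = (2*n)+1 by ring, pf]
  have h1 : (2*n+1) % 2 = 1 := by omega
  rw [h1]
  have : (2*n+1) % 4 = 1 ↔ n % 2 = 0 := by omega
  split <;> split <;> simp_all <;> omega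

lemma pf_le_one (n : ℕ) : pf n ≤ 1 := by
  induction n using Nat.strong_induction_on with
  | _ n ih =>
    match n with
    | 0 => simp [pf]
    | m + 1 =>
      rw [pf]
      split
      · exact ih _ (Nat.div_lt_self (Nat.succ_pos m) one_lt_two)
      · split <;> omega

lemma tm_cast_odd (k : ℕ) : (tm (2*k+1) : ℝ) = 1 - (tm k : ℝ) := by
  rw [tm_two_mul_add_one, Nat.cast_sub (tm_le_one k), Nat.cast_one]

lemma pf_odd_cast (k : ℕ) : 2*(pf (2*k+1) : ℝ) - 1 = -(-1:ℝ)^k := by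
  rw [pf_odd]
  rcases Nat.even_or_odd k with h | h
  · rw [if_pos (Nat.even_iff.mp h), h.neg_one_pow]; norm_num
  · have h1 : k % 2 = 1 := Nat.odd_iff.mp h
    rw [if_neg (by omega), h.neg_one_pow]; norm_num

open HurwitzZeta Complex in
lemma bern5 : ((Polynomial.bernoulli 5).map (algebraMap ℚ ℂ)).eval ((1/4 : ℝ) : ℂ) = -25/1024 := by
  have h5 : _root_.bernoulli 5 = 0 := by
    rw [bernoulli_eq_bernoulli'_of_ne_one (by norm_num)]
    exact bernoulli'_eq_zero_of_odd ⟨2, rfl⟩ (by norm_num)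
  have h3 : _root_.bernoulli 3 = 0 := by
    rw [bernoulli_eq_bernoulli'_of_ne_one (by norm_num)]
    exact bernoulli'_eq_zero_of_odd ⟨1, rfl⟩ (by norm_num)
  have h2 : _root_.bernoulli 2 = 1/6 := by
    rw [bernoulli_eq_bernoulli'_of_ne_one (by norm_num)]; exact bernoulli'_two
  have h4 : _root_.bernoulli 4 = -1/30 := by
    rw [bernoulli_eq_bernoulli'_of_ne_one (by norm_num)]; exact bernoulli'_four
  simp [Polynomial.bernoulli, Finset.sum_range_succ, h5, h3, h2, h4, bernoulli_zero, bernoulli_one,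
    Polynomial.eval_monomial]
  norm_num [Nat.choose]

open HurwitzZeta Complex in
lemma sinZeta_val : sinZeta ((1/4 : ℝ) : UnitAddCircle) 5 = 5 * (Real.pi:ℂ) ^ 5 / 1536 := by
  have h := sinZeta_two_mul_nat_add_one (k := 2) (x := (1/4 : ℝ)) two_ne_zero
    (by constructor <;> norm_num)
  rw [show ((2:ℂ) * (2:ℕ) + 1 : ℂ) = 5 by norm_num] at h
  rw [h, bern5]
  rw [show (2 * 2 + 1 : ℕ) = 5 from rfl]
  have hf : ((Nat.factorial 5 : ℕ) : ℂ) = 120 := by norm_num [Nat.factorial]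
  rw [hf]
  ring

open HurwitzZeta Complex in
lemma hasSum_beta5 :
    HasSum (fun n : ℕ => Real.sin (Real.pi * n / 2) / ((n:ℝ)) ^ 5) (5 * Real.pi ^ 5 / 1536) := by
  have h := hasSum_nat_sinZeta (1/4 : ℝ) (s := 5) (by norm_num)
  rw [sinZeta_val] at h
  rw [← Complex.hasSum_ofReal]
  have hv : ((5 * Real.pi ^ 5 / 1536 : ℝ) : ℂ) = 5 * (Real.pi:ℂ)^5/1536 := by push_cast; ring
  rw [hv]
  refine h.congr_fun fun n => ?_
  rw [show (5:ℂ) = ((5:ℕ):ℂ) by norm_num, cpow_natCast]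
  push_cast
  ring_nf

lemma sin_odd_val (k : ℕ) : Real.sin (Real.pi * ((2*k+1 : ℕ):ℝ) / 2) = (-1:ℝ)^k := by
  have harg : Real.pi * ((2*k+1 : ℕ):ℝ) / 2 = (k:ℝ) * Real.pi + Real.pi/2 := by
    push_cast; ring
  rw [harg, Real.sin_add_pi_div_two]
  simpa using Real.cos_nat_mul_pi_sub 0 k

-- summability helpers
lemma summable_base : Summable (fun n : ℕ => (1:ℝ)/(n:ℝ)^5) :=
  Real.summable_one_div_nat_pow.mpr (by norm_num)

lemma summable_shift : Summable (fun n : ℕ => (1:ℝ)/((n:ℝ)+1)^5) := by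
  have := (summable_nat_add_iff 1).mpr summable_base
  refine this.congr fun n => ?_
  push_cast
  ring_nf

lemma div_abs_le (a : ℝ) (d : ℝ) (hd : 0 ≤ d) (ha : |a| ≤ 1) : ‖a / d‖ ≤ 1 / d := by
  rw [Real.norm_eq_abs, abs_div, abs_of_nonneg hd]
  rcases eq_or_lt_of_le hd with h | h
  · simp [← h]
  · gcongr

lemma summable_bdd {c : ℕ → ℝ} (h : ∀ n, |c n| ≤ 1) :
    Summable (fun n : ℕ => c n / (n:ℝ)^5) := by
  refine Summable.of_norm_bounded summable_base fun n => ?_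
  exact div_abs_le _ _ (by positivity) (h n)

lemma summable_bdd' {c : ℕ → ℝ} (h : ∀ n, |c n| ≤ 1) :
    Summable (fun n : ℕ => c n / ((n:ℝ)+1)^5) := by
  refine Summable.of_norm_bounded summable_shift fun n => ?_
  exact div_abs_le _ _ (by positivity) (h n)

lemma summable_bdd'' {c : ℕ → ℝ} (h : ∀ n, |c n| ≤ 1) :
    Summable (fun n : ℕ => c n / (2*(n:ℝ)+1)^5) := by
  refine Summable.of_norm_bounded summable_shift fun n => ?_
  refine (div_abs_le _ _ (by positivity) (h n)).trans ?_
  have hn0 : (0:ℝ) ≤ (n:ℝ) := Nat.cast_nonneg n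
  gcongr <;> linarith

lemma abs_tm (n : ℕ) : |(tm n : ℝ)| ≤ 1 := by
  rw [abs_of_nonneg (Nat.cast_nonneg _)]
  exact_mod_cast tm_le_one n

lemma abs_pf (n : ℕ) : |2*(pf n : ℝ) - 1| ≤ 1 := by
  have := pf_le_one n
  have h0 : (0:ℝ) ≤ (pf n : ℝ) := Nat.cast_nonneg _
  have h1 : (pf n : ℝ) ≤ 1 := by exact_mod_cast this
  rw [abs_le]; constructor <;> linarith

lemma abs_sin (n : ℕ) : |Real.sin (Real.pi * n / 2)| ≤ 1 := Real.abs_sin_le_one _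

set_option maxHeartbeats 2000000 in
theorem zeta_five_minus_pi_fifth :
    (∑' n : ℕ, (1:ℝ) / ((n:ℝ) + 1) ^ 5) - (5/3) * Real.pi ^ 5 =
      ∑' n : ℕ,
        ((1/32) * (33 * (tm n : ℝ) + 31 * (tm (n+1) : ℝ)) + 496 * (2 * (pf (n+1) : ℝ) - 1))
          / ((n:ℝ) + 1) ^ 5 := by
  classical
  -- the sequences
  set fA : ℕ → ℝ := fun n => (tm n : ℝ) / (n:ℝ)^5 with hfA
  set fB : ℕ → ℝ := fun n => (tm n : ℝ) / ((n:ℝ)+1)^5 with hfB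
  set fC : ℕ → ℝ := fun n => (tm n : ℝ) / (2*(n:ℝ)+1)^5 with hfC
  set fG : ℕ → ℝ := fun n => (1:ℝ) / (n:ℝ)^5 with hfG
  set fZ : ℕ → ℝ := fun n => (1:ℝ) / ((n:ℝ)+1)^5 with hfZ
  set fL : ℕ → ℝ := fun n => (1:ℝ) / (2*(n:ℝ)+1)^5 with hfL
  set fF : ℕ → ℝ := fun n => (2*(pf n : ℝ) - 1) / (n:ℝ)^5 with hfF
  set fS : ℕ → ℝ := fun n => Real.sin (Real.pi * n / 2) / (n:ℝ)^5 with hfS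
  -- summability
  have one_bdd : ∀ n : ℕ, |(1:ℝ)| ≤ 1 := fun n => by norm_num
  have sA : Summable fA := summable_bdd abs_tm
  have sB : Summable fB := summable_bdd' abs_tm
  have sC : Summable fC := summable_bdd'' abs_tm
  have sG : Summable fG := summable_base
  have sZ : Summable fZ := summable_shift
  have sL : Summable fL := summable_bdd'' one_bdd
  have sF : Summable fF := summable_bdd abs_pf
  have sS : Summable fS := summable_bdd abs_sin
  -- pointwise even/odd identities
  have cast2 : ∀ k : ℕ, ((2*k : ℕ):ℝ) = 2*(k:ℝ) := fun k => by push_cast; ring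
  have cast2' : ∀ k : ℕ, ((2*k+1 : ℕ):ℝ) = 2*(k:ℝ)+1 := fun k => by push_cast; ring
  have hA2 : ∀ k, fA (2*k) = fA k / 32 := by
    intro k
    simp only [hfA, tm_two_mul, cast2]
    rw [div_div]
    congr 1
    ring
  have hA2o : ∀ k, fA (2*k+1) = fL k - fC k := by
    intro k
    simp only [hfA, hfL, hfC, tm_cast_odd, cast2']
    rw [sub_div]
  have hG2 : ∀ k, fG (2*k) = fG k / 32 := by
    intro k
    simp only [hfG, cast2]
    rcases Nat.eq_zero_or_pos k with rfl | hk
    · norm_num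
    · rw [div_div]
      congr 1
      ring
  have hG2o : ∀ k, fG (2*k+1) = fL k := by
    intro k; simp only [hfG, hfL, cast2']
  have hB2 : ∀ k, fB (2*k) = fC k := by
    intro k; simp only [hfB, hfC, tm_two_mul, cast2]
  have hB2o : ∀ k, fB (2*k+1) = (fZ k - fB k) / 32 := by
    intro k
    simp only [hfB, hfZ, tm_cast_odd, cast2']
    rw [sub_div, sub_div, div_div, div_div]
    congr 2 <;> ring
  have hF2 : ∀ k, fF (2*k) = fF k / 32 := by
    intro k
    simp only [hfF, pf_two_mul, cast2]
    rcases Nat.eq_zero_or_pos k with rfl | hk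
    · norm_num [pf]
    · rw [div_div]
      congr 1
      ring
  have hF2o : ∀ k, fF (2*k+1) = -fS (2*k+1) := by
    intro k
    simp only [hfF, hfS, pf_odd_cast, sin_odd_val, neg_div, neg_neg]
  have hS2 : ∀ k, fS (2*k) = 0 := by
    intro k
    simp only [hfS, cast2]
    have : Real.pi * (2*(k:ℝ)) / 2 = (k:ℝ) * Real.pi := by ring
    rw [this, Real.sin_nat_mul_pi, zero_div]
  -- summability of even/odd parts
  have sub2 : ∀ {f : ℕ → ℝ}, Summable f → Summable (fun k => f (2*k)) := by
    intro f hf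
    exact hf.comp_injective (fun a b h => by omega)
  have sub2o : ∀ {f : ℕ → ℝ}, Summable f → Summable (fun k => f (2*k+1)) := by
    intro f hf
    exact hf.comp_injective (fun a b h => by omega)
  -- the five equations
  set T := ∑' n, fA n with hT
  set U := ∑' n, fB n with hU
  set V := ∑' n, fC n with hV
  set Z := ∑' n, fZ n with hZ
  set G := ∑' n, fG n with hG
  set L := ∑' n, fL n with hL
  set F := ∑' n, fF n with hF
  -- G = Z
  have hGZ : G = Z := by
    rw [hG, tsum_eq_zero_add' (by
      refine ((summable_nat_add_iff 1).mpr sG))]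
    have h0 : fG 0 = 0 := by simp [hfG]
    rw [h0, zero_add, hZ]
    refine tsum_congr fun n => ?_
    simp only [hfG, hfZ]
    push_cast
    ring_nf
  -- eq for T
  have eqT : T / 32 + (L - V) = T := by
    have he : ∑' k, fA (2*k) = T / 32 := by
      rw [tsum_congr hA2, tsum_div_const]
    have ho : ∑' k, fA (2*k+1) = L - V := by
      rw [tsum_congr hA2o, sL.tsum_sub sC]
    rw [← he, ← ho, hT]
    exact tsum_even_add_odd (sub2 sA) (sub2o sA)
  -- eq for G
  have eqG : G / 32 + L = G := by
    have he : ∑' k, fG (2*k) = G / 32 := by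
      rw [tsum_congr hG2, tsum_div_const]
    have ho : ∑' k, fG (2*k+1) = L := tsum_congr hG2o
    rw [← he, ← ho, hG]
    exact tsum_even_add_odd (sub2 sG) (sub2o sG)
  -- eq for U
  have eqU : V + (Z - U) / 32 = U := by
    have he : ∑' k, fB (2*k) = V := tsum_congr hB2
    have ho : ∑' k, fB (2*k+1) = (Z - U) / 32 := by
      rw [tsum_congr hB2o, tsum_div_const, sZ.tsum_sub sB]
    rw [← he, ← ho, hU]
    exact tsum_even_add_odd (sub2 sB) (sub2o sB)
  -- sine sum
  have hSsum : ∑' n, fS n = 5 * Real.pi ^ 5 / 1536 := hasSum_beta5.tsum_eq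
  have hSodd : ∑' k, fS (2*k+1) = 5 * Real.pi ^ 5 / 1536 := by
    have he : ∑' k, fS (2*k) = 0 := by
      rw [tsum_congr hS2]; exact tsum_zero
    have := tsum_even_add_odd (f := fS) (sub2 sS) (sub2o sS)
    rw [he, zero_add] at this
    rw [this, hSsum]
  -- eq for F
  have eqF : F / 32 - 5 * Real.pi ^ 5 / 1536 = F := by
    have he : ∑' k, fF (2*k) = F / 32 := by
      rw [tsum_congr hF2, tsum_div_const]
    have ho : ∑' k, fF (2*k+1) = -(5 * Real.pi ^ 5 / 1536) := by
      rw [tsum_congr hF2o, tsum_neg, hSodd]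
    have h := tsum_even_add_odd (f := fF) (sub2 sF) (sub2o sF)
    rw [he, ho] at h
    rw [← hF] at h  -- maybe unnecessary
    linarith [h]
  -- shifted sums
  have sA1 : Summable (fun n => fA (n+1)) := (summable_nat_add_iff 1).mpr sA
  have sF1 : Summable (fun n => fF (n+1)) := (summable_nat_add_iff 1).mpr sF
  have hTsh : ∑' n, fA (n+1) = T := by
    have := tsum_eq_zero_add' (f := fA) sA1
    have h0 : fA 0 = 0 := by simp [hfA, tm]
    rw [h0, zero_add] at this
    rw [← this, hT]
  have hFsh : ∑' n, fF (n+1) = F := by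
    have := tsum_eq_zero_add' (f := fF) sF1
    have h0 : fF 0 = 0 := by norm_num [hfF]
    rw [h0, zero_add] at this
    rw [← this, hF]
  -- rewrite RHS
  have hRHS : (∑' n : ℕ,
        ((1/32) * (33 * (tm n : ℝ) + 31 * (tm (n+1) : ℝ)) + 496 * (2 * (pf (n+1) : ℝ) - 1))
          / ((n:ℝ) + 1) ^ 5) = (33/32) * U + ((31/32) * T + 496 * F) := by
    have hpt : ∀ n : ℕ,
        ((1/32) * (33 * (tm n : ℝ) + 31 * (tm (n+1) : ℝ)) + 496 * (2 * (pf (n+1) : ℝ) - 1))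
          / ((n:ℝ) + 1) ^ 5
        = (33/32) * fB n + ((31/32) * fA (n+1) + 496 * fF (n+1)) := by
      intro n
      have hc : ((n+1 : ℕ):ℝ) = (n:ℝ) + 1 := by push_cast; ring
      simp only [hfB, hfA, hfF, hc]
      field_simp
      ring
    rw [tsum_congr hpt, (sB.mul_left _).tsum_add ((sA1.mul_left _).add (sF1.mul_left _)),
      (sA1.mul_left _).tsum_add (sF1.mul_left _), tsum_mul_left, tsum_mul_left, tsum_mul_left,
      hTsh, hFsh, ← hU]
  rw [hRHS]
  -- final arithmetic
  have hZG : Z = G := hGZ.symm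
  nlinarith [eqT, eqG, eqU, eqF, hZG]
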